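/- arXiv:2112.14049 — 6 statements merged into one kernel-verified Lean document; each statement's English description precedes it below -/
import Mathlib

section
/- If S is a locale (complete Heyting algebra) with the entailment relation defined by U ▷ a iff ⋀U ≤ a, then a map j : S → S is a nucleus over this entailment relation (i.e., satisfies rules Lj and Rj) if and only if j is a nucleus on the locale S (i.e., a closure operator satisfying ja ∧ jb ≤ j(a ∧ b)). -/
/-- A single-conclusion entailment relation on `S`. -/
structure IsEntailment {S : Type*} [DecidableEq S] (E : Finset S → S → Prop) : Prop where
  refl : ∀ (U : Finset S) (a : S), a ∈ U → E U a
  mono : ∀ (U U' : Finset S) (a : S), E U a → E (U ∪ U') a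
  cut : ∀ (V V' : Finset S) (a b : S), E V b → E (insert b V') a → E (V ∪ V') a

/-- A nucleus over an entailment relation. -/
structure IsNucleus {S : Type*} [DecidableEq S] (E : Finset S → S → Prop) (j : S → S) : Prop where
  lj : ∀ (U : Finset S) (a b : S), E (insert a U) (j b) → E (insert (j a) U) (j b)
  rj : ∀ (U : Finset S) (b : S), E U b → E U (j b)

/-- over a locale with the entailment relation `U ▷ a iff ⋀U ≤ a`,
a map `j` is a nucleus over the entailment relation iff it is a nucleus on the
locale (a closure operator satisfying `ja ⊓ jb ≤ j(a ⊓ b)`). -/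
theorem nucleus_entailment_iff_nucleus_locale {S : Type*} [Order.Frame S] [DecidableEq S]
    (j : S → S) :
    IsNucleus (fun (U : Finset S) (a : S) => U.inf id ≤ a) j ↔
      ((∀ a : S, a ≤ j a) ∧ (∀ a b : S, a ≤ j b → j a ≤ j b) ∧
        (∀ a b : S, j a ⊓ j b ≤ j (a ⊓ b))) := by
  constructor
  · rintro ⟨lj, rj⟩
    refine ⟨?_, ?_, ?_⟩
    · intro a
      simpa using rj {a} a (by simp)
    · intro a b h
      simpa using lj ∅ a b (by simpa using h)
    · intro a b
      have h0 : (({a, b} : Finset S).inf id : S) ≤ j (a ⊓ b) := rj _ _ (by simp)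
      have h1 := lj {b} a (a ⊓ b) h0
      have h2 := lj {j a} b (a ⊓ b) (by simpa [inf_comm] using h1)
      simpa [inf_comm] using h2
  · rintro ⟨h1, h2, h3⟩
    constructor
    · intro U a b h
      calc (insert (j a) U).inf id = j a ⊓ U.inf id := by simp
        _ ≤ j a ⊓ j (U.inf id) := inf_le_inf_left _ (h1 _)
        _ ≤ j (a ⊓ U.inf id) := h3 _ _
        _ ≤ j b := h2 _ _ (by simpa using h)
    · intro U b h
      exact h.trans (h1 b)
end

section
/- Let S carry an algebraic structure with a unary self-inverse operation j (j ∘ j = id), and let ▷ be the entailment relation of substructures, generated inductively by the axioms a₁,...,aₙ ▷ f(a₁,...,aₙ) for every n-ary operation f (including j). Then j is a nucleus over ▷. -/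
/-- Generators of the entailment relation of substructures: all axioms
`a₁,…,aₙ ▷ f(a₁,…,aₙ)` for the operations of the structure (including `j`). -/
def SubstructureGen {S : Type*} [DecidableEq S] {I : Type*} (n : I → ℕ)
    (f : ∀ i, (Fin (n i) → S) → S) (j : S → S) (E : Finset S → S → Prop) : Prop :=
  IsEntailment E ∧
  (∀ (i : I) (args : Fin (n i) → S), E (Finset.image args Finset.univ) (f i args)) ∧
  (∀ a : S, E {a} (j a))

/-- The least entailment relation satisfying the substructure axioms. -/
def SubstructureDerives {S : Type*} [DecidableEq S] {I : Type*} (n : I → ℕ)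
    (f : ∀ i, (Fin (n i) → S) → S) (j : S → S) (U : Finset S) (a : S) : Prop :=
  ∀ E : Finset S → S → Prop, SubstructureGen n f j E → E U a

/-- if `j` is a self-inverse unary operation of the structure, then
`j` is a nucleus over the entailment relation of substructures. -/
theorem selfInverse_nucleus_substructures {S : Type*} [DecidableEq S] {I : Type*}
    (n : I → ℕ) (f : ∀ i, (Fin (n i) → S) → S) (j : S → S)
    (hjj : ∀ a : S, j (j a) = a) :
    IsNucleus (SubstructureDerives n f j) j := by
  constructor
  · intro U a b h E hE
    have hax : E {j a} a := by
      have := hE.2.2 (j a)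
      rwa [hjj] at this
    have hcut := hE.1.cut {j a} U (j b) a hax (h E hE)
    rwa [Finset.insert_eq]
  · intro U b h E hE
    have hcut := hE.1.cut U (∅ : Finset S) (j b) b (h E hE) (hE.2.2 b)
    simpa using hcut
end

section
/- Let ▷ be an entailment relation inductively generated by axioms and rules and j a nucleus over ▷. Then ▷^j is conservative over ▷_j (i.e., ▷^j ⊆ ▷_j, hence ▷^j = ▷_j) if and only if every non-axiom rule generating ▷ is compatible with j, meaning that each such rule also holds for ▷_j. -/
/-- A rule (instance): a set of premisses together with a conclusion. -/
abbrev EntRule (S : Type*) := Set (Finset S × S) × (Finset S × S)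

/-- A relation satisfies a rule if the conclusion holds whenever all premisses do. -/
def RuleSat {S : Type*} (E : Finset S → S → Prop) (r : EntRule S) : Prop :=
  (∀ p ∈ r.1, E p.1 p.2) → E r.2.1 r.2.2

/-- The entailment relation inductively generated by a set of axioms and rules. -/
def Derives {S : Type*} [DecidableEq S] (Rules : Set (EntRule S))
    (U : Finset S) (a : S) : Prop :=
  ∀ E : Finset S → S → Prop, IsEntailment E → (∀ r ∈ Rules, RuleSat E r) → E U a

/-- The stability axioms `ja ▷ a`, viewed as rules without premisses. -/
def StabRules {S : Type*} (j : S → S) : Set (EntRule S) :=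
  {r | ∃ a : S, r = (∅, ({j a}, a))}

lemma derives_isEntailment {S : Type*} [DecidableEq S] (Rules : Set (EntRule S)) :
    IsEntailment (Derives Rules) where
  refl := fun U a h E hE _ => hE.refl U a h
  mono := fun U U' a h E hE hR => hE.mono U U' a (h E hE hR)
  cut := fun V V' a b h1 h2 E hE hR => hE.cut V V' a b (h1 E hE hR) (h2 E hE hR)

/-- `▷^j` is conservative over `▷_j` if and only if every
non-axiom rule generating `▷` is compatible with `j` (holds for `▷_j`). -/
theorem conservation_iff_compatible {S : Type*} [DecidableEq S]
    (Rules : Set (EntRule S)) (j : S → S)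
    (hj : IsNucleus (Derives Rules) j) :
    (∀ (U : Finset S) (a : S), Derives (Rules ∪ StabRules j) U a →
        Derives Rules U (j a)) ↔
      (∀ r ∈ Rules, r.1 ≠ ∅ →
        RuleSat (fun (U : Finset S) (a : S) => Derives Rules U (j a)) r) := by
  have hDE := derives_isEntailment Rules
  constructor
  · intro hcons r hr _ hprem
    apply hcons
    intro E hE hR
    have hp : ∀ p ∈ r.1, E p.1 p.2 := by
      intro p hp
      have h1 : E p.1 (j p.2) :=
        hprem p hp E hE (fun r' hr' => hR r' (Or.inl hr'))
      have h2 : E (insert (j p.2) ∅) p.2 := by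
        have := hR (∅, ({j p.2}, p.2)) (Or.inr ⟨p.2, rfl⟩)
          (fun q hq => absurd hq (Set.notMem_empty q))
        simpa using this
      have := hE.cut p.1 ∅ p.2 (j p.2) h1 h2
      simpa using this
    exact hR r (Or.inl hr) hp
  · intro hcomp U a h
    have hEj : IsEntailment (fun (U : Finset S) (a : S) => Derives Rules U (j a)) := by
      constructor
      · exact fun U a ha => hj.rj U a (hDE.refl U a ha)
      · exact fun U U' a h => hDE.mono U U' (j a) h
      · intro V V' a b h1 h2
        exact hDE.cut V V' (j a) (j b) h1 (hj.lj V' b a h2)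
    apply h _ hEj
    rintro r (hr | ⟨b, rfl⟩)
    · by_cases hne : r.1 = ∅
      · intro _
        have hax : Derives Rules r.2.1 r.2.2 := fun E hE hR =>
          hR r hr (fun p hp => absurd hp (by simp [hne]))
        exact hj.rj _ _ hax
      · exact hcomp r hr hne
    · intro _
      exact hDE.refl {j b} (j b) (Finset.mem_singleton_self _)
end

section
/- If an entailment relation ▷ is inductively generated only by axioms (no non-axiom generating rules beyond (R), (M), (T)) and j is a nucleus over ▷, then ▷^j = ▷_j; i.e., U ▷^j a if and only if U ▷ ja. -/
/-- if `▷` is generated only by axioms, then `▷^j = ▷_j`. -/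
theorem conservation_of_axiom_generated {S : Type*} [DecidableEq S]
    (Rules : Set (EntRule S)) (j : S → S)
    (hax : ∀ r ∈ Rules, r.1 = ∅)
    (hj : IsNucleus (Derives Rules) j) :
    ∀ (U : Finset S) (a : S),
      Derives (Rules ∪ StabRules j) U a ↔ Derives Rules U (j a) := by
  have hEnt : IsEntailment (Derives Rules) :=
    { refl := fun U a h E hE _ => hE.refl U a h
      mono := fun U U' a h E hE hR => hE.mono U U' a (h E hE hR)
      cut := fun V V' a b h1 h2 E hE hR => hE.cut V V' a b (h1 E hE hR) (h2 E hE hR) }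
  have hSat : ∀ r ∈ Rules, RuleSat (Derives Rules) r := by
    intro r hr hp E hE hR
    exact hR r hr (fun p hpmem => hp p hpmem E hE hR)
  intro U a
  constructor
  · intro h
    refine h (fun V b => Derives Rules V (j b)) ?_ ?_
    · exact
      { refl := fun V b hb => hj.rj V b (hEnt.refl V b hb)
        mono := fun V V' b hd => hEnt.mono V V' (j b) hd
        cut := fun V V' b c h1 h2 =>
          hEnt.cut V V' (j b) (j c) h1 (hj.lj V' c b h2) }
    · rintro r (hr | ⟨c, rfl⟩)
      · intro _
        have h0 : Derives Rules r.2.1 r.2.2 := hSat r hr (by rw [hax r hr]; simp)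
        exact hj.rj _ _ h0
      · intro _
        exact show Derives Rules {j c} (j c) from
          hEnt.refl {j c} (j c) (Finset.mem_singleton_self _)
  · intro h E hE hR
    have hja : E U (j a) := h E hE (fun r hr => hR r (Or.inl hr))
    have hst : E {j a} a := hR (∅, ({j a}, a)) (Or.inr ⟨a, rfl⟩) (by simp [RuleSat])
    have := hE.cut U ∅ a (j a) hja (by simpa using hst)
    simpa using this
end

section
/- Let j be a nucleus over an inductively generated entailment relation ▷, and let ▷_* be ▷ plus a collection of additional axioms all of which are valid in ▷^j (an intermediate j-extension). Then (▷_*)^j = ▷^j. -/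
/-- for an intermediate `j`-extension `▷_*` of `▷`, obtained by
adding axioms valid in `▷^j`, one has `(▷_*)^j = ▷^j`. -/
theorem intermediate_strongExtension_eq {S : Type*} [DecidableEq S]
    (Rules Ax : Set (EntRule S)) (j : S → S)
    (hj : IsNucleus (Derives Rules) j)
    (hAx : ∀ r ∈ Ax, r.1 = ∅ ∧ Derives (Rules ∪ StabRules j) r.2.1 r.2.2) :
    ∀ (U : Finset S) (a : S),
      Derives (Rules ∪ Ax ∪ StabRules j) U a ↔ Derives (Rules ∪ StabRules j) U a := by
  have hEnt : IsEntailment (Derives (Rules ∪ StabRules j)) :=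
    ⟨fun U a h E hE hR => hE.refl U a h,
     fun U U' a h E hE hR => hE.mono U U' a (h E hE hR),
     fun V V' a b h1 h2 E hE hR => hE.cut V V' a b (h1 E hE hR) (h2 E hE hR)⟩
  have hSat : ∀ r ∈ Rules ∪ StabRules j, RuleSat (Derives (Rules ∪ StabRules j)) r := by
    intro r hr hp E hE hR
    exact hR r hr fun p hpp => hp p hpp E hE hR
  intro U a
  constructor
  · intro h
    apply h _ hEnt
    intro r hr
    rcases hr with hr | hr
    · rcases hr with hr | hr
      · exact hSat r (Or.inl hr)
      · exact fun _ => (hAx r hr).2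
    · exact hSat r (Or.inr hr)
  · intro h E hE hR
    apply h E hE
    intro r hr
    rcases hr with hr | hr
    · exact hR r (Or.inl (Or.inl hr))
    · exact hR r (Or.inr hr)
end

section
/- Let ▷ be an entailment relation with nucleus j, and let r be a rule with premisses U₁ ▷ b₁, ..., Uₙ ▷ bₙ and conclusion U ▷ b that holds for ▷. Then r is compatible with j (holds for ▷_j) if and only if for every instance of r there exists β ∈ S with β ▷ jb such that from the premisses U₁ ▷ jb₁, ..., Uₙ ▷ jbₙ one may derive U ▷ β. -/
/-- a rule `r` (given as its set of instances) holding for `▷` is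
compatible with `j` iff for every instance with conclusion `U ▷ b` there is a
`β` with `β ▷ jb` such that `U ▷ β` is derivable from the premisses
`U₁ ▷ jb₁, …, Uₙ ▷ jbₙ`. -/
theorem compatible_iff_beta_criterion {S : Type*} [DecidableEq S]
    (E : Finset S → S → Prop) (j : S → S) (r : Set (EntRule S))
    (hE : IsEntailment E) (hj : IsNucleus E j)
    (hr : ∀ inst ∈ r, RuleSat E inst) :
    (∀ inst ∈ r, RuleSat (fun (U : Finset S) (a : S) => E U (j a)) inst) ↔
      (∀ inst ∈ r, ∃ β : S, E {β} (j inst.2.2) ∧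
        ((∀ p ∈ inst.1, E p.1 (j p.2)) → E inst.2.1 β)) := by
  constructor
  · intro h inst hinst
    refine ⟨j inst.2.2, hE.refl _ _ (Finset.mem_singleton_self _), ?_⟩
    exact h inst hinst
  · intro h inst hinst hprem
    obtain ⟨β, hβ, hU⟩ := h inst hinst
    have := hE.cut inst.2.1 ∅ (j inst.2.2) β (hU hprem) hβ
    simpa using this
end
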